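/- Let y be a non-constant stationary strategy with U²(μ₀,y) ≥ v², where v² = max_{b∈B} Σ_{s∈S} m(s)·u²(s,b). Then for every ε̄ > 0 there exists a payoff function ũ²: S×B → R with ‖ũ² − u²‖ < ε̄ such that Ũ²(μ₀,y) > ṽ², where Ũ² and ṽ² are defined from ũ² in the same way as U² and v² are defined from u². -/
import Mathlib


/-- `y` is a stationary strategy: each `y a` is a probability distribution on `B`. -/
def IsStrategy {S B : Type*} [Fintype B] (y : S → B → ℝ) : Prop :=
  (∀ a b, 0 ≤ y a b) ∧ ∀ a, ∑ b, y a b = 1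

/- `U²(μ₀,y) = Σ_s m(s) Σ_b y(b|s) u²(s,b)`; the condition `U²(μ₀,y) ≥ v²` (resp. `> v²`),
where `v² = max_b Σ_s m(s)u²(s,b)`, is expressed as the inequality against every `b`. -/
theorem stmt9 {S B : Type*} [Fintype S] [Nonempty S] [Fintype B] [Nonempty B]
    (m : S → ℝ) (hm : ∀ s, 0 < m s) (hm1 : ∑ s, m s = 1)
    (u2 : S × B → ℝ)
    (y : S → B → ℝ) (hy : IsStrategy y)
    (hnc : ∃ s s' : S, y s ≠ y s')
    (hIR : ∀ b : B, ∑ s, m s * u2 (s, b) ≤ ∑ s, m s * ∑ b', y s b' * u2 (s, b'))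
    (ε : ℝ) (hε : 0 < ε) :
    ∃ u2' : S × B → ℝ, ‖u2' - u2‖ < ε ∧
      ∀ b : B, ∑ s, m s * u2' (s, b) < ∑ s, m s * ∑ b', y s b' * u2' (s, b') := by
  obtain ⟨hy0, hy1⟩ := hy
  set ybar : B → ℝ := fun b => ∑ s, m s * y s b with hybar
  set c : ℝ := ∑ b, ∑ s, m s * (y s b - ybar b) ^ 2 with hc
  -- c > 0
  have hcnn : ∀ b, (0:ℝ) ≤ ∑ s, m s * (y s b - ybar b) ^ 2 := by
    intro b
    exact Finset.sum_nonneg fun s _ => mul_nonneg (hm s).le (sq_nonneg _)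
  have hc0 : 0 < c := by
    obtain ⟨s, s', hss⟩ := hnc
    have hb : ∃ b, y s b ≠ y s' b := by
      by_contra h
      push_neg at h
      exact hss (funext h)
    obtain ⟨b, hb⟩ := hb
    have hone : ∃ t, y t b ≠ ybar b := by
      by_contra h
      push_neg at h
      exact hb ((h s).trans (h s').symm)
    obtain ⟨t, ht⟩ := hone
    have hinner : 0 < ∑ s, m s * (y s b - ybar b) ^ 2 := by
      apply Finset.sum_pos'
      · intro i _; exact mul_nonneg (hm i).le (sq_nonneg _)
      · exact ⟨t, Finset.mem_univ t,
          mul_pos (hm t)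
            (lt_of_le_of_ne (sq_nonneg _)
              (Ne.symm (pow_ne_zero 2 (sub_ne_zero.mpr ht))))⟩
    calc (0:ℝ) < ∑ s, m s * (y s b - ybar b) ^ 2 := hinner
      _ ≤ c := Finset.single_le_sum (fun b _ => hcnn b) (Finset.mem_univ b)
  set δ : ℝ := ε / 2 with hδ
  have hδ0 : 0 < δ := by positivity
  refine ⟨fun p => u2 p + δ * (y p.1 p.2 - ybar p.2), ?_, ?_⟩
  · -- norm bound
    have hy_le1 : ∀ s b, y s b ≤ 1 := by
      intro s b
      calc y s b ≤ ∑ b', y s b' :=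
            Finset.single_le_sum (fun b' _ => hy0 s b') (Finset.mem_univ b)
        _ = 1 := hy1 s
    have hybar0 : ∀ b, 0 ≤ ybar b :=
      fun b => Finset.sum_nonneg fun s _ => mul_nonneg (hm s).le (hy0 s b)
    have hybar1 : ∀ b, ybar b ≤ 1 := by
      intro b
      calc ybar b ≤ ∑ s, m s * 1 :=
            Finset.sum_le_sum fun s _ => mul_le_mul_of_nonneg_left (hy_le1 s b) (hm s).le
        _ = 1 := by simp [hm1]
    rw [pi_norm_lt_iff hε]
    intro p
    have : |(fun p => u2 p + δ * (y p.1 p.2 - ybar p.2)) p - u2 p|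
        = |δ * (y p.1 p.2 - ybar p.2)| := by ring_nf
    simp only [Pi.sub_apply]
    rw [Real.norm_eq_abs, show u2 p + δ * (y p.1 p.2 - ybar p.2) - u2 p
        = δ * (y p.1 p.2 - ybar p.2) by ring, abs_mul, abs_of_pos hδ0]
    have habs : |y p.1 p.2 - ybar p.2| ≤ 1 := by
      rw [abs_le]
      constructor <;> nlinarith [hy0 p.1 p.2, hy_le1 p.1 p.2, hybar0 p.2, hybar1 p.2]
    nlinarith
  · intro b
    have hL : ∑ s, m s * (u2 (s, b) + δ * (y s b - ybar b))
        = ∑ s, m s * u2 (s, b) := by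
      have h1 : ∀ s : S, m s * (u2 (s, b) + δ * (y s b - ybar b))
          = m s * u2 (s, b) + δ * (m s * y s b) - (δ * ybar b) * m s := by
        intro s; ring
      rw [Finset.sum_congr rfl fun s _ => h1 s, Finset.sum_sub_distrib,
        Finset.sum_add_distrib, ← Finset.mul_sum, ← Finset.mul_sum, hm1,
        show (∑ s, m s * y s b) = ybar b from rfl]
      ring
    have hE : ∑ s, m s * ∑ b', y s b' * (u2 (s, b') + δ * (y s b' - ybar b'))
        = (∑ s, m s * ∑ b', y s b' * u2 (s, b')) + δ * c := by
      have h1 : ∀ s : S, m s * ∑ b', y s b' * (u2 (s, b') + δ * (y s b' - ybar b'))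
          = m s * ∑ b', y s b' * u2 (s, b')
            + δ * ∑ b', m s * (y s b' * (y s b' - ybar b')) := by
        intro s
        rw [Finset.mul_sum, Finset.mul_sum, Finset.mul_sum, ← Finset.sum_add_distrib]
        exact Finset.sum_congr rfl fun b' _ => by ring
      rw [Finset.sum_congr rfl fun s _ => h1 s, Finset.sum_add_distrib, ← Finset.mul_sum]
      congr 1
      rw [Finset.sum_comm]
      try rw [hc]
      congr 1
      apply Finset.sum_congr rfl
      intro b' _
      have hyb : ∑ s, m s * y s b' = ybar b' := rfl
      have h2 : ∀ s : S, m s * (y s b' * (y s b' - ybar b'))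
          = m s * (y s b' - ybar b') ^ 2 + ybar b' * (m s * y s b')
            - (ybar b' * ybar b') * m s := fun s => by ring
      rw [Finset.sum_congr rfl fun s _ => h2 s, Finset.sum_sub_distrib,
        Finset.sum_add_distrib, ← Finset.mul_sum, ← Finset.mul_sum, hm1, hyb]
      ring
    show ∑ s, m s * (u2 (s, b) + δ * (y s b - ybar b))
        < ∑ s, m s * ∑ b', y s b' * (u2 (s, b') + δ * (y s b' - ybar b'))
    rw [hL, hE]
    linarith [hIR b, mul_pos hδ0 hc0]
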